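/- Let p be an odd prime, p \le n < 2p, and m an integer with representative \bar{m}, 0 \le \bar{m} < p. Then p^{-1} \sum_{\zeta \in \mu_p} \zeta^m (1-\zeta^{-1})^n = (-1)^{\bar{m}} \binom{n}{\bar{m}} - (-1)^{\bar{m}} \binom{n}{\bar{m}+p}. -/

import Mathlib

/-- For `p` an odd prime, `p ≤ n < 2p`, and `m ≡ m̄ (mod p)` with `0 ≤ m̄ < p`,
`p⁻¹ ∑_{ζ ∈ μ_p} ζ^m (1 - ζ⁻¹)^n = (-1)^m̄ (n choose m̄) - (-1)^m̄ (n choose (m̄+p))`. -/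
theorem stmt_2 (p : ℕ) (hp : p.Prime) (hodd : Odd p) (n : ℕ) (hn1 : p ≤ n) (hn2 : n < 2 * p)
    (m : ℤ) (mbar : ℕ) (hmbar : mbar < p) (hcong : m ≡ (mbar : ℤ) [ZMOD (p : ℤ)])
    (ζ : ℂ) (hζ : IsPrimitiveRoot ζ p) :
    (p : ℂ)⁻¹ * ∑ k ∈ Finset.range p, (ζ ^ k) ^ m * (1 - (ζ ^ k)⁻¹) ^ n =
      (-1 : ℂ) ^ mbar * (n.choose mbar : ℂ) - (-1 : ℂ) ^ mbar * (n.choose (mbar + p) : ℂ) := by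
  have hp0 : p ≠ 0 := hp.ne_zero
  have hζ0 : ζ ≠ 0 := hζ.ne_zero hp0
  have hpC : (p : ℂ) ≠ 0 := Nat.cast_ne_zero.mpr hp0
  -- geometric sum lemma
  have geo : ∀ d : ℤ, ∑ k ∈ Finset.range p, (ζ ^ d) ^ k
      = if (p : ℤ) ∣ d then (p : ℂ) else 0 := by
    intro d
    by_cases hd : (p : ℤ) ∣ d
    · rw [(hζ.zpow_eq_one_iff_dvd d).mpr hd, if_pos hd]
      simp
    · have hne : ζ ^ d ≠ 1 := fun h => hd ((hζ.zpow_eq_one_iff_dvd d).mp h)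
      rw [geom_sum_eq hne, if_neg hd]
      have : (ζ ^ d) ^ p = 1 := by
        rw [← zpow_natCast (ζ ^ d) p, ← zpow_mul, mul_comm, zpow_mul,
          zpow_natCast, hζ.pow_eq_one, one_zpow]
      rw [this, sub_self, zero_div]
  -- rewrite summand
  have key : ∀ k, (ζ ^ k) ^ m * (1 - (ζ ^ k)⁻¹) ^ n
      = ∑ j ∈ Finset.range (n + 1), (-1 : ℂ) ^ j * (n.choose j) * (ζ ^ ((m : ℤ) - j)) ^ k := by
    intro k
    have hk0 : (ζ : ℂ) ^ k ≠ 0 := pow_ne_zero _ hζ0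
    have : (1 - (ζ ^ k)⁻¹) ^ n
        = ∑ j ∈ Finset.range (n + 1), (-(ζ ^ k)⁻¹) ^ j * (n.choose j) := by
      rw [show (1 : ℂ) - (ζ ^ k)⁻¹ = -(ζ ^ k)⁻¹ + 1 by ring, add_pow]
      simp
    rw [this, Finset.mul_sum]
    refine Finset.sum_congr rfl fun j hj => ?_
    have h1 : (-(ζ ^ k)⁻¹ : ℂ) ^ j = (-1) ^ j * ((ζ ^ k) ^ (-(j : ℤ))) := by
      rw [neg_pow, inv_pow, ← zpow_natCast (ζ ^ k) j, ← zpow_neg]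
    rw [h1]
    have h2 : (ζ ^ k) ^ m * ((ζ ^ k) ^ (-(j : ℤ))) = (ζ ^ k) ^ (m - (j : ℤ)) := by
      rw [← zpow_add₀ hk0]; ring_nf
    have h3 : (ζ ^ k) ^ (m - (j : ℤ)) = (ζ ^ (m - (j : ℤ))) ^ k := by
      rw [← zpow_natCast ζ k, ← zpow_mul,
        ← zpow_natCast (ζ ^ (m - (j : ℤ))) k, ← zpow_mul, mul_comm]
    calc (ζ ^ k) ^ m * ((-1 : ℂ) ^ j * (ζ ^ k) ^ (-(j : ℤ)) * (n.choose j))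
        = (-1 : ℂ) ^ j * (n.choose j) * ((ζ ^ k) ^ m * (ζ ^ k) ^ (-(j : ℤ))) := by ring
      _ = _ := by rw [h2, h3]
  simp only [key]
  rw [Finset.sum_comm]
  simp only [← Finset.mul_sum, geo]
  simp only [mul_ite, mul_zero]
  rw [← Finset.sum_filter]
  -- characterize membership in the filter
  have filt : ∀ j, j < n + 1 → (((p : ℤ) ∣ m - j) ↔ (j = mbar ∨ j = mbar + p)) := by
    intro j hj
    constructor
    · intro hd
      have hmod : (j : ℤ) ≡ (mbar : ℤ) [ZMOD (p : ℤ)] :=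
        (Int.modEq_iff_dvd.mpr hd).trans hcong
      have hm : j % p = mbar := by
        have hn := Int.natCast_modEq_iff.mp hmod
        rw [Nat.ModEq, Nat.mod_eq_of_lt hmbar] at hn
        exact hn
      rcases lt_or_ge j p with h | h
      · left; rw [Nat.mod_eq_of_lt h] at hm; omega
      · right
        have h2 : j - p < p := by omega
        have h3 : j % p = j - p := by
          conv_lhs => rw [show j = (j - p) + p by omega]
          rw [Nat.add_mod_right, Nat.mod_eq_of_lt h2]
        omega
    · have h1 : (p : ℤ) ∣ m - mbar := by
        have := dvd_neg.mpr hcong.dvd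
        rwa [neg_sub] at this
      rintro (rfl | rfl)
      · exact h1
      · rw [show ((mbar + p : ℕ) : ℤ) = (mbar : ℤ) + p by push_cast; ring,
          show m - ((mbar : ℤ) + p) = (m - mbar) - p by ring]
        exact h1.sub (dvd_refl _)
  have hpow : (-1 : ℂ) ^ (mbar + p) = -(-1 : ℂ) ^ mbar := by
    rw [pow_add, hodd.neg_one_pow]; ring
  by_cases hc : mbar + p ≤ n
  · have hfe : (Finset.range (n + 1)).filter (fun j : ℕ => (p : ℤ) ∣ m - (j : ℤ))
        = {mbar, mbar + p} := by
      ext j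
      simp only [Finset.mem_filter, Finset.mem_range, Finset.mem_insert,
        Finset.mem_singleton]
      constructor
      · rintro ⟨hj, hd⟩; exact (filt j hj).mp hd
      · rintro (rfl | rfl)
        · exact ⟨by omega, (filt _ (by omega)).mpr (Or.inl rfl)⟩
        · exact ⟨by omega, (filt _ (by omega)).mpr (Or.inr rfl)⟩
    rw [hfe, Finset.sum_insert (by simp; omega), Finset.sum_singleton, hpow]
    field_simp
    ring
  · have hch : (n.choose (mbar + p) : ℂ) = 0 := by
      rw [Nat.choose_eq_zero_of_lt (by omega)]; simp
    have hfe : (Finset.range (n + 1)).filter (fun j : ℕ => (p : ℤ) ∣ m - (j : ℤ)) = {mbar} := by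
      ext j
      simp only [Finset.mem_filter, Finset.mem_range, Finset.mem_singleton]
      constructor
      · rintro ⟨hj, hd⟩
        rcases (filt j hj).mp hd with h | h
        · exact h
        · omega
      · rintro rfl
        exact ⟨by omega, (filt _ (by omega)).mpr (Or.inl rfl)⟩
    rw [hfe, Finset.sum_singleton, hch]
    field_simp
    ring
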